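/- arXiv:1307.3839 — 2 statements merged into one kernel-verified Lean document; each statement's English description precedes it below -/
import Mathlib

section
/- Let F be the free group on two generators, and let τ : F × F → ℤ be the group homomorphism determined by sending each of the four standard generators (the two generators of the first factor and the two generators of the second factor) to 1 ∈ ℤ; equivalently, τ(w₁, w₂) is the sum of the exponent sums of w₁ and w₂. Then the kernel K of τ is a finitely generated group. -/
namespace StallingsAux

open Subgroup

abbrev F2 := FreeGroup (Fin 2)

def x0 : F2 := FreeGroup.of 0
def x1 : F2 := FreeGroup.of 1

def sg : F2 →* Multiplicative ℤ := FreeGroup.lift (fun _ => Multiplicative.ofAdd 1)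

def e (w : F2) : ℤ := Multiplicative.toAdd (sg w)

lemma e_mul (u v : F2) : e (u*v) = e u + e v := by simp [e, map_mul]
lemma e_of (i : Fin 2) : e (FreeGroup.of i) = 1 := by simp [e, sg]
lemma e_one : e (1 : F2) = 0 := by simp [e]
lemma e_inv (u : F2) : e u⁻¹ = - e u := by simp [e]
lemma ofAdd_e (w : F2) : Multiplicative.ofAdd (e w) = sg w := rfl

def S : Set (F2 × F2) := {(x0*x1⁻¹, 1), (1, x0*x1⁻¹), (x0, x0⁻¹)}

def H : Subgroup (F2 × F2) := closure S

lemma mem1 : ((x0*x1⁻¹, 1) : F2 × F2) ∈ H := subset_closure (by simp [S])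
lemma mem2 : ((1, x0*x1⁻¹) : F2 × F2) ∈ H := subset_closure (by simp [S])
lemma mem3 : ((x0, x0⁻¹) : F2 × F2) ∈ H := subset_closure (by simp [S])

lemma mem1' : ((x1*x0⁻¹, 1) : F2 × F2) ∈ H := by
  have h := H.inv_mem mem1
  have heq : (((x0*x1⁻¹, 1) : F2 × F2))⁻¹ = ((x1*x0⁻¹, 1) : F2 × F2) := by
    refine Prod.ext ?_ ?_
    · show (x0*x1⁻¹)⁻¹ = x1*x0⁻¹; group
    · show (1:F2)⁻¹ = 1; group
  rwa [heq] at h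

lemma mem2' : ((1, x1*x0⁻¹) : F2 × F2) ∈ H := by
  have h := H.inv_mem mem2
  have heq : (((1, x0*x1⁻¹) : F2 × F2))⁻¹ = ((1, x1*x0⁻¹) : F2 × F2) := by
    refine Prod.ext ?_ ?_
    · show (1:F2)⁻¹ = 1; group
    · show (x0*x1⁻¹)⁻¹ = x1*x0⁻¹; group
  rwa [heq] at h

lemma g3_zpow (n : ℤ) : ((x0, x0⁻¹) : F2 × F2) ^ n = (x0 ^ n, x0 ^ (-n)) := by
  ext
  · simp
  · simp [zpow_neg, inv_zpow]

lemma conjH (n : ℤ) {u v : F2} (h : ((u, v) : F2 × F2) ∈ H) :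
    ((x0 ^ n * u * x0 ^ (-n), x0 ^ (-n) * v * x0 ^ n) : F2 × F2) ∈ H := by
  have := H.mul_mem (H.mul_mem (H.zpow_mem mem3 n) h) (H.zpow_mem mem3 (-n))
  rw [g3_zpow, g3_zpow] at this
  simpa [Prod.mk_mul_mk, mul_assoc] using this

lemma step1 (i : Fin 2) (n : ℤ) :
    ((x0 ^ n * FreeGroup.of i * x0 ^ (-(n+1)), (1:F2)) : F2 × F2) ∈ H := by
  fin_cases i
  · show ((x0 ^ n * x0 * x0 ^ (-(n+1)), (1:F2)) : F2 × F2) ∈ H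
    have hpair : ((x0 ^ n * x0 * x0 ^ (-(n+1)), (1:F2)) : F2 × F2) = ((1:F2), (1:F2)) :=
      Prod.ext (by group) rfl
    rw [hpair]; exact H.one_mem
  · show ((x0 ^ n * x1 * x0 ^ (-(n+1)), (1:F2)) : F2 × F2) ∈ H
    have h := conjH n mem1'
    have hpair : ((x0 ^ n * x1 * x0 ^ (-(n+1)), (1:F2)) : F2 × F2)
        = (x0 ^ n * (x1*x0⁻¹) * x0 ^ (-n), x0 ^ (-n) * 1 * x0 ^ n) :=
      Prod.ext (by group) (by group)
    rw [hpair]; exact h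

lemma step1' (i : Fin 2) (n : ℤ) :
    ((x0 ^ n * (FreeGroup.of i)⁻¹ * x0 ^ (-(n-1)), (1:F2)) : F2 × F2) ∈ H := by
  fin_cases i
  · show ((x0 ^ n * x0⁻¹ * x0 ^ (-(n-1)), (1:F2)) : F2 × F2) ∈ H
    have hpair : ((x0 ^ n * x0⁻¹ * x0 ^ (-(n-1)), (1:F2)) : F2 × F2) = ((1:F2), (1:F2)) :=
      Prod.ext (by group) rfl
    rw [hpair]; exact H.one_mem
  · show ((x0 ^ n * x1⁻¹ * x0 ^ (-(n-1)), (1:F2)) : F2 × F2) ∈ H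
    have h := conjH (n-1) mem1
    have hpair : ((x0 ^ n * x1⁻¹ * x0 ^ (-(n-1)), (1:F2)) : F2 × F2)
        = (x0 ^ (n-1) * (x0*x1⁻¹) * x0 ^ (-(n-1)), x0 ^ (-(n-1)) * 1 * x0 ^ (n-1)) :=
      Prod.ext (by group) (by group)
    rw [hpair]; exact h

lemma step2 (i : Fin 2) (n : ℤ) :
    (((1:F2), x0 ^ n * FreeGroup.of i * x0 ^ (-(n+1))) : F2 × F2) ∈ H := by
  fin_cases i
  · show (((1:F2), x0 ^ n * x0 * x0 ^ (-(n+1))) : F2 × F2) ∈ H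
    have hpair : (((1:F2), x0 ^ n * x0 * x0 ^ (-(n+1))) : F2 × F2) = ((1:F2), (1:F2)) :=
      Prod.ext rfl (by group)
    rw [hpair]; exact H.one_mem
  · show (((1:F2), x0 ^ n * x1 * x0 ^ (-(n+1))) : F2 × F2) ∈ H
    have h := conjH (-n) mem2'
    have hpair : (((1:F2), x0 ^ n * x1 * x0 ^ (-(n+1))) : F2 × F2)
        = (x0 ^ (-n) * 1 * x0 ^ (-(-n)), x0 ^ (-(-n)) * (x1*x0⁻¹) * x0 ^ (-n)) :=
      Prod.ext (by group) (by group)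
    rw [hpair]; exact h

lemma step2' (i : Fin 2) (n : ℤ) :
    (((1:F2), x0 ^ n * (FreeGroup.of i)⁻¹ * x0 ^ (-(n-1))) : F2 × F2) ∈ H := by
  fin_cases i
  · show (((1:F2), x0 ^ n * x0⁻¹ * x0 ^ (-(n-1))) : F2 × F2) ∈ H
    have hpair : (((1:F2), x0 ^ n * x0⁻¹ * x0 ^ (-(n-1))) : F2 × F2) = ((1:F2), (1:F2)) :=
      Prod.ext rfl (by group)
    rw [hpair]; exact H.one_mem
  · show (((1:F2), x0 ^ n * x1⁻¹ * x0 ^ (-(n-1))) : F2 × F2) ∈ H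
    have h := conjH (-(n-1)) mem2
    have hpair : (((1:F2), x0 ^ n * x1⁻¹ * x0 ^ (-(n-1))) : F2 × F2)
        = (x0 ^ (-(n-1)) * 1 * x0 ^ (-(-(n-1))), x0 ^ (-(-(n-1))) * (x0*x1⁻¹) * x0 ^ (-(n-1))) :=
      Prod.ext (by group) (by group)
    rw [hpair]; exact h

lemma L1 (w : F2) : ∀ n : ℤ, ((x0 ^ n * w * x0 ^ (-(n + e w)), (1:F2)) : F2 × F2) ∈ H := by
  induction w using FreeGroup.induction_on with
  | C1 =>
      intro n
      have hpair : ((x0 ^ n * 1 * x0 ^ (-(n + e (1:F2))), (1:F2)) : F2 × F2) = ((1:F2), (1:F2)) :=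
        Prod.ext (by rw [e_one]; group) rfl
      rw [hpair]; exact H.one_mem
  | of i =>
      intro n
      show ((x0 ^ n * FreeGroup.of i * x0 ^ (-(n + e (FreeGroup.of i))), (1:F2)) : F2 × F2) ∈ H
      rw [e_of]
      exact step1 i n
  | inv_of i _ =>
      intro n
      show ((x0 ^ n * (FreeGroup.of i)⁻¹ * x0 ^ (-(n + e (FreeGroup.of i)⁻¹)), (1:F2)) : F2 × F2) ∈ H
      rw [e_inv, e_of]
      have h := step1' i n
      have hx : -(n - 1) = -(n + -1) := by ring
      rwa [hx] at h
  | mul u v hu hv =>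
      intro n
      have h := H.mul_mem (hu n) (hv (n + e u))
      have hpair : ((x0 ^ n * (u * v) * x0 ^ (-(n + e (u*v))), (1:F2)) : F2 × F2)
          = (x0 ^ n * u * x0 ^ (-(n + e u)), 1) * (x0 ^ (n + e u) * v * x0 ^ (-(n + e u + e v)), 1) := by
        rw [e_mul]
        refine Prod.ext ?_ ?_
        · show _ = (x0 ^ n * u * x0 ^ (-(n + e u))) * (x0 ^ (n + e u) * v * x0 ^ (-(n + e u + e v)))
          group
        · show (1:F2) = 1 * 1; group
      rw [hpair]; exact h

lemma L2 (w : F2) : ∀ n : ℤ, (((1:F2), x0 ^ n * w * x0 ^ (-(n + e w))) : F2 × F2) ∈ H := by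
  induction w using FreeGroup.induction_on with
  | C1 =>
      intro n
      have hpair : (((1:F2), x0 ^ n * 1 * x0 ^ (-(n + e (1:F2)))) : F2 × F2) = ((1:F2), (1:F2)) :=
        Prod.ext rfl (by rw [e_one]; group)
      rw [hpair]; exact H.one_mem
  | of i =>
      intro n
      show (((1:F2), x0 ^ n * FreeGroup.of i * x0 ^ (-(n + e (FreeGroup.of i)))) : F2 × F2) ∈ H
      rw [e_of]
      exact step2 i n
  | inv_of i _ =>
      intro n
      show (((1:F2), x0 ^ n * (FreeGroup.of i)⁻¹ * x0 ^ (-(n + e (FreeGroup.of i)⁻¹))) : F2 × F2) ∈ H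
      rw [e_inv, e_of]
      have h := step2' i n
      have hx : -(n - 1) = -(n + -1) := by ring
      rwa [hx] at h
  | mul u v hu hv =>
      intro n
      have h := H.mul_mem (hu n) (hv (n + e u))
      have hpair : (((1:F2), x0 ^ n * (u * v) * x0 ^ (-(n + e (u*v)))) : F2 × F2)
          = (1, x0 ^ n * u * x0 ^ (-(n + e u))) * (1, x0 ^ (n + e u) * v * x0 ^ (-(n + e u + e v))) := by
        rw [e_mul]
        refine Prod.ext ?_ ?_
        · show (1:F2) = 1 * 1; group
        · show _ = (x0 ^ n * u * x0 ^ (-(n + e u))) * (x0 ^ (n + e u) * v * x0 ^ (-(n + e u + e v)))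
          group
      rw [hpair]; exact h

end StallingsAux

open StallingsAux Subgroup in
/-- Stallings' example: the kernel of the homomorphism `F₂ × F₂ → ℤ` sending each
standard generator to `1` is finitely generated. -/
theorem stallings_kernel_fg
    (τ : FreeGroup (Fin 2) × FreeGroup (Fin 2) →* Multiplicative ℤ)
    (h₁ : ∀ i : Fin 2, τ (FreeGroup.of i, 1) = Multiplicative.ofAdd 1)
    (h₂ : ∀ i : Fin 2, τ (1, FreeGroup.of i) = Multiplicative.ofAdd 1) :
    Subgroup.FG τ.ker := by
  have hl : τ.comp (MonoidHom.inl F2 F2) = sg := by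
    apply FreeGroup.ext_hom
    intro i
    simpa [sg] using h₁ i
  have hr : τ.comp (MonoidHom.inr F2 F2) = sg := by
    apply FreeGroup.ext_hom
    intro i
    simpa [sg] using h₂ i
  have hτ : ∀ p : F2 × F2, τ p = Multiplicative.ofAdd (e p.1 + e p.2) := by
    intro p
    have hp : p = (p.1, 1) * (1, p.2) := by simp
    conv_lhs => rw [hp]
    rw [map_mul]
    have h1 : τ (p.1, 1) = sg p.1 := DFunLike.congr_fun hl p.1
    have h2 : τ (1, p.2) = sg p.2 := DFunLike.congr_fun hr p.2
    rw [h1, h2, ofAdd_add, ofAdd_e, ofAdd_e]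
  have hSker : S ⊆ (τ.ker : Set (F2 × F2)) := by
    intro g hg
    rcases hg with h | h | h <;>
      · subst h
        show τ _ = 1
        rw [hτ]
        simp [e_mul, e_inv, e_of, e_one, x0, x1]
  have hkerH : τ.ker ≤ H := by
    intro p hp
    have hz : e p.1 + e p.2 = 0 := by
      have h := (hτ p).symm
      rw [MonoidHom.mem_ker.mp hp, ← ofAdd_zero] at h
      exact Multiplicative.ofAdd.injective h
    have h3 : ((x0, x0⁻¹) : F2 × F2) ^ (e p.1) ∈ H := H.zpow_mem mem3 _
    rw [g3_zpow] at h3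
    have hu := L1 p.1 0
    have hv := L2 p.2 0
    have hp' : p = (x0 ^ (0:ℤ) * p.1 * x0 ^ (-((0:ℤ) + e p.1)), 1)
        * (1, x0 ^ (0:ℤ) * p.2 * x0 ^ (-((0:ℤ) + e p.2)))
        * (x0 ^ (e p.1), x0 ^ (-(e p.1))) := by
      refine Prod.ext ?_ ?_
      · show p.1 = _
        simp only [Prod.fst_mul]
        group
      · show p.2 = _
        simp only [Prod.snd_mul]
        rw [show (-(e p.1)) = e p.2 by linarith]
        group
    rw [hp']
    exact H.mul_mem (H.mul_mem hu hv) h3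
  classical
  refine ⟨{(x0*x1⁻¹, 1), (1, x0*x1⁻¹), (x0, x0⁻¹)}, ?_⟩
  have hcoe : (({(x0*x1⁻¹, 1), (1, x0*x1⁻¹), (x0, x0⁻¹)} : Finset (F2 × F2)) : Set (F2 × F2)) = S := by
    simp [S]
  rw [hcoe]
  exact le_antisymm ((closure_le _).mpr hSker) hkerH
end

section
/- Let F be the free group on two generators, and let τ : F × F → ℤ be the group homomorphism determined by sending each of the four standard generators (the two generators of the first factor and the two generators of the second factor) to 1 ∈ ℤ; equivalently, τ(w₁, w₂) is the sum of the exponent sums of w₁ and w₂. Then the kernel K of τ is not finitely presentable: there do not exist a natural number n and a finite set of relators R ⊆ FreeGroup(Fin n) such that the presented group ⟨Fin n ∣ R⟩ is isomorphic to K. -/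
open FreeGroup Subgroup Function Multiplicative
open scoped commutatorElement

namespace Stallings

abbrev Fz := FreeGroup ℤ

def shE (k : ℤ) : Fz ≃* Fz := FreeGroup.freeGroupCongr (Equiv.addRight k)

@[simp] lemma shE_of (k n : ℤ) : shE k (FreeGroup.of n) = FreeGroup.of (n + k) := by
  simp [shE]

lemma shE_mul (x y : ℤ) : shE (x + y) = shE x * shE y := by
  show _ = (shE y).trans (shE x)
  rw [shE, shE, shE, FreeGroup.freeGroupCongr_trans]
  congr 1
  ext z
  simp [add_comm, add_assoc, add_left_comm]

def sh : Multiplicative ℤ →* MulAut Fz :=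
  MonoidHom.mk' (fun g => shE g.toAdd) (fun a b => by
    show shE (toAdd a + toAdd b) = _
    exact shE_mul _ _)

@[simp] lemma sh_of (g : Multiplicative ℤ) (n : ℤ) :
    sh g (FreeGroup.of n) = FreeGroup.of (n + g.toAdd) := by
  simp [sh]

/-- shift action on the product of two copies. -/
def sh2 : Multiplicative ℤ →* MulAut (Fz × Fz) :=
  MonoidHom.mk' (fun g => MulEquiv.prodCongr (sh g) (sh g)) (fun a b => by
    ext x
    · show sh (a * b) x.1 = sh a (sh b x.1)
      rw [_root_.map_mul sh]; rfl
    · show sh (a * b) x.2 = sh a (sh b x.2)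
      rw [_root_.map_mul sh]; rfl)

@[simp] lemma sh2_apply (g : Multiplicative ℤ) (p : Fz × Fz) :
    sh2 g p = (sh g p.1, sh g p.2) := rfl

abbrev W1 := Fz ⋊[sh] Multiplicative ℤ

abbrev F2 := FreeGroup (Fin 2)

/-- the generators -/
def gx : F2 := FreeGroup.of 0
def gy : F2 := FreeGroup.of 1

/-- basis of the kernel of the exponent-sum map -/
def czn (n : ℤ) : F2 := gx ^ n * gy * gx ^ (-(n + 1))

@[simp] lemma ofAdd_one_zpow (n : ℤ) : (ofAdd (1 : ℤ)) ^ n = ofAdd n := by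
  apply toAdd.injective
  simp

/-- the map `W1 →* F2` -/
def eta : W1 →* F2 :=
  SemidirectProduct.lift (FreeGroup.lift czn) (zpowersHom F2 gx) (fun g => by
    apply FreeGroup.ext_hom
    intro n
    simp only [MonoidHom.comp_apply, MulEquiv.coe_toMonoidHom, sh_of, FreeGroup.lift_apply_of,
      MulAut.conj_apply, zpowersHom_apply, czn]
    group)

@[simp] lemma eta_inl (f : Fz) : eta (SemidirectProduct.inl f) = FreeGroup.lift czn f :=
  SemidirectProduct.lift_inl _ _ _ _

@[simp] lemma eta_inr (g : Multiplicative ℤ) : eta (SemidirectProduct.inr g) = gx ^ g.toAdd := by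
  rw [eta, SemidirectProduct.lift_inr, zpowersHom_apply]

/-- the map `F2 →* W1` -/
def theta : F2 →* W1 :=
  FreeGroup.lift
    ![SemidirectProduct.inr (ofAdd 1), SemidirectProduct.inl (FreeGroup.of 0) * SemidirectProduct.inr (ofAdd 1)]

@[simp] lemma theta_x : theta gx = SemidirectProduct.inr (ofAdd 1) := by
  simp [theta, gx]

@[simp] lemma theta_y :
    theta gy = SemidirectProduct.inl (FreeGroup.of 0) * SemidirectProduct.inr (ofAdd 1) := by
  simp [theta, gy]

lemma theta_comp_eta : theta.comp eta = MonoidHom.id W1 := by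
  apply SemidirectProduct.hom_ext
  · apply FreeGroup.ext_hom
    intro n
    show theta (eta (SemidirectProduct.inl (FreeGroup.of n))) = SemidirectProduct.inl (FreeGroup.of n)
    rw [eta_inl, FreeGroup.lift_apply_of]
    rw [czn, MonoidHom.map_mul, MonoidHom.map_mul, MonoidHom.map_zpow, MonoidHom.map_zpow,
      theta_x, theta_y]
    rw [← MonoidHom.map_zpow, ofAdd_one_zpow, ← MonoidHom.map_zpow, ofAdd_one_zpow]
    have h1 : (ofAdd (1:ℤ)) * ofAdd (-(n+1)) = (ofAdd n)⁻¹ := by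
      apply toAdd.injective; simp
    simp only [mul_assoc]
    rw [← MonoidHom.map_mul, h1, ← mul_assoc, ← SemidirectProduct.inl_aut]
    simp
  · apply MonoidHom.ext_mint
    simp

lemma eta_comp_theta : eta.comp theta = MonoidHom.id F2 := by
  apply FreeGroup.ext_hom
  intro i
  fin_cases i
  · show eta (theta gx) = gx
    simp
  · show eta (theta gy) = gy
    rw [theta_y, MonoidHom.map_mul, eta_inl, eta_inr, FreeGroup.lift_apply_of, czn]
    simp [zpow_neg]


/-- `W1 ≃* F2` -/
def e1 : W1 ≃* F2 :=
  { toFun := eta, invFun := theta,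
    left_inv := fun w => by
      have := DFunLike.congr_fun theta_comp_eta w
      simpa using this,
    right_inv := fun w => by
      have := DFunLike.congr_fun eta_comp_theta w
      simpa using this,
    map_mul' := map_mul eta }

@[simp] lemma e1_apply (w : W1) : e1 w = eta w := rfl

/-- exponent sum homomorphism -/
def sigma : F2 →* Multiplicative ℤ := FreeGroup.lift (fun _ => ofAdd 1)

@[simp] lemma sigma_of (i : Fin 2) : sigma (FreeGroup.of i) = ofAdd 1 := FreeGroup.lift_apply_of

/-- inversion of generators -/
def omegaHom : F2 →* F2 := FreeGroup.lift (fun i => (FreeGroup.of i)⁻¹)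

@[simp] lemma omegaHom_of (i : Fin 2) : omegaHom (FreeGroup.of i) = (FreeGroup.of i)⁻¹ :=
  FreeGroup.lift_apply_of

lemma omegaHom_invol (w : F2) : omegaHom (omegaHom w) = w := by
  have : omegaHom.comp omegaHom = MonoidHom.id F2 := by
    apply FreeGroup.ext_hom
    intro i
    simp
  simpa using DFunLike.congr_fun this w

/-- inversion of generators, as an automorphism -/
def omega : F2 ≃* F2 :=
  { toFun := omegaHom, invFun := omegaHom, left_inv := omegaHom_invol,
    right_inv := omegaHom_invol, map_mul' := map_mul omegaHom }

def e2 : W1 ≃* F2 := e1.trans omega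

@[simp] lemma e2_apply (w : W1) : e2 w = omegaHom (eta w) := rfl

lemma sigma_comp_eta : sigma.comp eta = SemidirectProduct.rightHom := by
  apply SemidirectProduct.hom_ext
  · apply FreeGroup.ext_hom
    intro n
    show sigma (eta (SemidirectProduct.inl (FreeGroup.of n))) =
      (SemidirectProduct.rightHom : W1 →* Multiplicative ℤ) (SemidirectProduct.inl (FreeGroup.of n))
    rw [eta_inl, FreeGroup.lift_apply_of, SemidirectProduct.rightHom_inl, czn]
    simp only [map_mul, map_zpow, gx, gy, sigma_of]
    apply toAdd.injective
    simp
  · apply MonoidHom.ext_mint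
    show sigma (eta (SemidirectProduct.inr (ofAdd 1))) =
      (SemidirectProduct.rightHom : W1 →* Multiplicative ℤ) (SemidirectProduct.inr (ofAdd (1:ℤ)))
    rw [eta_inr, SemidirectProduct.rightHom_inr]
    simp [gx]

lemma sigma_eta (w : W1) : sigma (eta w) = SemidirectProduct.rightHom w :=
  DFunLike.congr_fun sigma_comp_eta w

lemma sigma_omegaHom (w : F2) : sigma (omegaHom w) = (sigma w)⁻¹ := by
  have : sigma.comp omegaHom = sigma⁻¹ := by
    apply FreeGroup.ext_hom
    intro i
    simp
  simpa using DFunLike.congr_fun this w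

lemma sigma_e2 (w : W1) : sigma (e2 w) = (SemidirectProduct.rightHom w)⁻¹ := by
  rw [e2_apply, sigma_omegaHom, sigma_eta]

/-- ext lemma for homs out of products -/
lemma prod_hom_ext {M N P : Type*} [Monoid M] [Monoid N] [Monoid P] {f g : M × N →* P}
    (h1 : f.comp (MonoidHom.inl M N) = g.comp (MonoidHom.inl M N))
    (h2 : f.comp (MonoidHom.inr M N) = g.comp (MonoidHom.inr M N)) : f = g := by
  ext ⟨m, n⟩
  have hmn : (m, n) = (m, 1) * (1, n) := by simp
  have e1' := DFunLike.congr_fun h1 m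
  have e2' := DFunLike.congr_fun h2 n
  simp only [MonoidHom.comp_apply, MonoidHom.inl_apply, MonoidHom.inr_apply] at e1' e2'
  rw [hmn, MonoidHom.map_mul, MonoidHom.map_mul, e1', e2']

lemma conj_helper (e : W1 →* F2) (g : Multiplicative ℤ) (f : Fz) :
    e (SemidirectProduct.inl (sh g f)) =
      e (SemidirectProduct.inr g) * e (SemidirectProduct.inl f) *
        (e (SemidirectProduct.inr g))⁻¹ := by
  rw [SemidirectProduct.inl_aut]
  simp [map_mul]

def f1W : Fz × Fz →* F2 × F2 :=
  MonoidHom.prodMap (e1.toMonoidHom.comp SemidirectProduct.inl)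
    (e2.toMonoidHom.comp SemidirectProduct.inl)

def f2W : Multiplicative ℤ →* F2 × F2 :=
  MonoidHom.prod (e1.toMonoidHom.comp SemidirectProduct.inr)
    (e2.toMonoidHom.comp SemidirectProduct.inr)

abbrev W := (Fz × Fz) ⋊[sh2] Multiplicative ℤ

/-- the embedding of `W` into `F2 × F2` -/
def iota : W →* F2 × F2 :=
  SemidirectProduct.lift f1W f2W (fun g => by
    apply prod_hom_ext
    · apply FreeGroup.ext_hom
      intro n
      apply Prod.ext
      · exact conj_helper e1.toMonoidHom g (FreeGroup.of n)
      · exact conj_helper e2.toMonoidHom g 1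
    · apply FreeGroup.ext_hom
      intro n
      apply Prod.ext
      · exact conj_helper e1.toMonoidHom g 1
      · exact conj_helper e2.toMonoidHom g (FreeGroup.of n))

lemma iota_mk (f g : Fz) (k : Multiplicative ℤ) :
    iota ⟨(f, g), k⟩ = (eta ⟨f, k⟩, omegaHom (eta ⟨g, k⟩)) := by
  rw [SemidirectProduct.mk_eq_inl_mul_inr, MonoidHom.map_mul, iota, SemidirectProduct.lift_inl,
    SemidirectProduct.lift_inr]
  have h1 : f1W (f, g) = (eta (SemidirectProduct.inl f), omegaHom (eta (SemidirectProduct.inl g))) := rfl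
  have h2 : f2W k = (eta (SemidirectProduct.inr k), omegaHom (eta (SemidirectProduct.inr k))) := rfl
  rw [h1, h2]
  apply Prod.ext
  · show eta _ * eta _ = _
    rw [← MonoidHom.map_mul, ← SemidirectProduct.mk_eq_inl_mul_inr]
  · show omegaHom (eta _) * omegaHom (eta _) = _
    rw [← MonoidHom.map_mul, ← MonoidHom.map_mul, ← SemidirectProduct.mk_eq_inl_mul_inr]


lemma eta_injective : Function.Injective eta := e1.injective

lemma omegaHom_injective : Function.Injective omegaHom := by
  intro x y h
  have := congrArg omegaHom h
  rwa [omegaHom_invol, omegaHom_invol] at this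

lemma iota_injective : Function.Injective iota := by
  rw [injective_iff_map_eq_one]
  rintro ⟨⟨f, g⟩, k⟩ hw
  rw [iota_mk] at hw
  have h1 : eta ⟨f, k⟩ = 1 := congrArg Prod.fst hw
  have h2 : omegaHom (eta ⟨g, k⟩) = 1 := congrArg Prod.snd hw
  have h1' : (⟨f, k⟩ : W1) = 1 :=
    eta_injective (h1.trans (MonoidHom.map_one eta).symm)
  have h2' : (⟨g, k⟩ : W1) = 1 := by
    apply eta_injective
    have := omegaHom_injective (h2.trans (MonoidHom.map_one omegaHom).symm)
    rw [this, MonoidHom.map_one]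
  have hf : f = 1 := congrArg SemidirectProduct.left h1'
  have hg : g = 1 := congrArg SemidirectProduct.left h2'
  have hk : k = 1 := congrArg SemidirectProduct.right h1'
  subst hf; subst hg; subst hk
  rfl

lemma iota_surj (u v : F2) (huv : sigma u * sigma v = 1) : ∃ w : W, iota w = (u, v) := by
  rcases hu : e1.symm u with ⟨f, k⟩
  rcases hv : e2.symm v with ⟨g, m⟩
  have hu' : eta ⟨f, k⟩ = u := by rw [← hu]; exact e1.apply_symm_apply u
  have hv' : omegaHom (eta ⟨g, m⟩) = v := by rw [← hv]; exact e2.apply_symm_apply v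
  have hsu : sigma u = k := by rw [← hu', sigma_eta]; rfl
  have hsv : sigma v = m⁻¹ := by
    rw [← hv', ← e2_apply, sigma_e2]; rfl
  have hmk : m = k := by
    rw [hsu, hsv] at huv
    have := mul_inv_eq_one.mp huv
    exact this.symm
  subst hmk
  exact ⟨⟨(f, g), m⟩, by rw [iota_mk, hu', hv']⟩

/-! ### The presentation of `W` -/

abbrev F3 := FreeGroup (Fin 3)

def ga : F3 := FreeGroup.of 0
def gb : F3 := FreeGroup.of 1
def gt' : F3 := FreeGroup.of 2

/-- the map realizing `W` as a quotient of the free group on three generators -/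
def phi : F3 →* W :=
  FreeGroup.lift
    ![SemidirectProduct.inl (FreeGroup.of 0, 1), SemidirectProduct.inl (1, FreeGroup.of 0),
      SemidirectProduct.inr (ofAdd 1)]

@[simp] lemma phi_a : phi ga = SemidirectProduct.inl (FreeGroup.of 0, 1) := by simp [phi, ga]
@[simp] lemma phi_b : phi gb = SemidirectProduct.inl (1, FreeGroup.of 0) := by simp [phi, gb]
@[simp] lemma phi_t : phi gt' = SemidirectProduct.inr (ofAdd 1) := by simp [phi, gt']

@[simp] lemma phi_t_zpow (k : ℤ) : phi (gt' ^ k) = SemidirectProduct.inr (ofAdd k) := by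
  rw [MonoidHom.map_zpow, phi_t, ← MonoidHom.map_zpow, ofAdd_one_zpow]

lemma conj_inl_w (k : ℤ) (p : Fz × Fz) :
    SemidirectProduct.inr (ofAdd k) * SemidirectProduct.inl p *
      (SemidirectProduct.inr (ofAdd k) : W)⁻¹ = SemidirectProduct.inl (sh2 (ofAdd k) p) := by
  rw [SemidirectProduct.inl_aut, MonoidHom.map_inv]

lemma phi_conj_a (k : ℤ) :
    phi (gt' ^ k * ga * gt' ^ (-k)) = SemidirectProduct.inl (FreeGroup.of k, 1) := by
  rw [MonoidHom.map_mul, MonoidHom.map_mul, phi_t_zpow, phi_t_zpow, phi_a]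
  have : (SemidirectProduct.inr (ofAdd (-k)) : W) = (SemidirectProduct.inr (ofAdd k))⁻¹ := by
    rw [← MonoidHom.map_inv]
    congr 1
  rw [this, conj_inl_w]
  have h2 : sh2 (ofAdd k) ((FreeGroup.of 0 : Fz), (1 : Fz)) = (FreeGroup.of k, 1) := by
    rw [sh2_apply]
    have ha : sh (ofAdd k) (FreeGroup.of 0) = FreeGroup.of k := by rw [sh_of]; simp
    have hb : sh (ofAdd k) (1 : Fz) = 1 := _root_.map_one _
    simp only [ha, hb]
  rw [h2]

lemma phi_conj_b (k : ℤ) :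
    phi (gt' ^ k * gb * gt' ^ (-k)) = SemidirectProduct.inl (1, FreeGroup.of k) := by
  rw [MonoidHom.map_mul, MonoidHom.map_mul, phi_t_zpow, phi_t_zpow, phi_b]
  have : (SemidirectProduct.inr (ofAdd (-k)) : W) = (SemidirectProduct.inr (ofAdd k))⁻¹ := by
    rw [← MonoidHom.map_inv]
    congr 1
  rw [this, conj_inl_w]
  have h2 : sh2 (ofAdd k) ((1 : Fz), (FreeGroup.of 0 : Fz)) = (1, FreeGroup.of k) := by
    rw [sh2_apply]
    have ha : sh (ofAdd k) (FreeGroup.of 0) = FreeGroup.of k := by rw [sh_of]; simp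
    have hb : sh (ofAdd k) (1 : Fz) = 1 := _root_.map_one _
    simp only [ha, hb]
  rw [h2]

lemma phi_surjective : Function.Surjective phi := by
  have h1 : ∀ f : Fz, ∃ x, phi x = SemidirectProduct.inl ((f, 1) : Fz × Fz) := by
    intro f
    induction f using FreeGroup.induction_on with
    | C1 =>
      exact ⟨1, by
        rw [MonoidHom.map_one, show ((1 : Fz), (1 : Fz)) = (1 : Fz × Fz) from rfl,
          MonoidHom.map_one]⟩
    | of n => exact ⟨gt' ^ n * ga * gt' ^ (-n), phi_conj_a n⟩
    | inv_of n _ =>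
      refine ⟨(gt' ^ n * ga * gt' ^ (-n))⁻¹, ?_⟩
      rw [MonoidHom.map_inv, phi_conj_a, ← MonoidHom.map_inv]
      congr 1
    | mul x y hx hy =>
      obtain ⟨x₁, hx₁⟩ := hx
      obtain ⟨y₁, hy₁⟩ := hy
      refine ⟨x₁ * y₁, ?_⟩
      rw [MonoidHom.map_mul, hx₁, hy₁, ← MonoidHom.map_mul]
      congr 1
  have h2 : ∀ g : Fz, ∃ x, phi x = SemidirectProduct.inl ((1, g) : Fz × Fz) := by
    intro g
    induction g using FreeGroup.induction_on with
    | C1 =>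
      exact ⟨1, by
        rw [MonoidHom.map_one, show ((1 : Fz), (1 : Fz)) = (1 : Fz × Fz) from rfl,
          MonoidHom.map_one]⟩
    | of n => exact ⟨gt' ^ n * gb * gt' ^ (-n), phi_conj_b n⟩
    | inv_of n _ =>
      refine ⟨(gt' ^ n * gb * gt' ^ (-n))⁻¹, ?_⟩
      rw [MonoidHom.map_inv, phi_conj_b, ← MonoidHom.map_inv]
      congr 1
    | mul x y hx hy =>
      obtain ⟨x₁, hx₁⟩ := hx
      obtain ⟨y₁, hy₁⟩ := hy
      refine ⟨x₁ * y₁, ?_⟩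
      rw [MonoidHom.map_mul, hx₁, hy₁, ← MonoidHom.map_mul]
      congr 1
  rintro ⟨⟨f, g⟩, k⟩
  obtain ⟨x₁, hx₁⟩ := h1 f
  obtain ⟨x₂, hx₂⟩ := h2 g
  refine ⟨x₁ * x₂ * gt' ^ (k.toAdd), ?_⟩
  rw [MonoidHom.map_mul, MonoidHom.map_mul, hx₁, hx₂, phi_t_zpow, ← MonoidHom.map_mul]
  have : ((f, 1) : Fz × Fz) * (1, g) = (f, g) := by rw [Prod.mk_mul_mk, mul_one, one_mul]
  rw [this, ofAdd_toAdd, ← SemidirectProduct.mk_eq_inl_mul_inr]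

/-! ### The relators -/

/-- conjugated generator -/
def cb (k : ℤ) : F3 := gt' ^ k * gb * gt' ^ (-k)

/-- the relators of the natural presentation of `W` -/
def rel (k : ℤ) : F3 := ⁅ga, cb k⁆

/-- the normal closure of the relators -/
def NN : Subgroup F3 := Subgroup.normalClosure (Set.range rel)

instance : NN.Normal := Subgroup.normalClosure_normal

lemma phi_rel (k : ℤ) : phi (rel k) = 1 := by
  rw [rel, map_commutatorElement, commutatorElement_eq_one_iff_commute, cb, phi_conj_b, phi_a]
  have : Commute ((FreeGroup.of 0, 1) : Fz × Fz) ((1, FreeGroup.of k) : Fz × Fz) := by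
    unfold Commute SemiconjBy
    rw [Prod.mk_mul_mk, Prod.mk_mul_mk, mul_one, one_mul, mul_one, one_mul]
  exact this.map SemidirectProduct.inl

lemma rel_mem_ker (k : ℤ) : rel k ∈ phi.ker := MonoidHom.mem_ker.mpr (phi_rel k)

lemma NN_le_ker : NN ≤ phi.ker :=
  Subgroup.normalClosure_le_normal (by rintro x ⟨k, rfl⟩; exact rel_mem_ker k)

/-- the presented group -/
abbrev QQ := F3 ⧸ NN

def pr : F3 →* QQ := QuotientGroup.mk' NN

/-- conjugated commuting relations hold in the quotient -/
lemma base_commute (m n : ℤ) :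
    Commute (pr (gt' ^ m * ga * gt' ^ (-m))) (pr (gt' ^ n * gb * gt' ^ (-n))) := by
  rw [← commutatorElement_eq_one_iff_commute, ← map_commutatorElement]
  have key : ⁅gt' ^ m * ga * gt' ^ (-m), gt' ^ n * gb * gt' ^ (-n)⁆ =
      gt' ^ m * rel (n - m) * (gt' ^ m)⁻¹ := by
    rw [rel, cb]
    rw [commutatorElement_def, commutatorElement_def]
    group
  rw [key]
  have hrel : rel (n - m) ∈ NN := Subgroup.subset_normalClosure ⟨n - m, rfl⟩
  have : gt' ^ m * rel (n - m) * (gt' ^ m)⁻¹ ∈ NN :=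
    (Subgroup.normalClosure_normal).conj_mem _ hrel _
  rwa [← QuotientGroup.eq_one_iff] at this

def psiA : Fz →* QQ := FreeGroup.lift (fun n => pr (gt' ^ n * ga * gt' ^ (-n)))

def psiB : Fz →* QQ := FreeGroup.lift (fun n => pr (gt' ^ n * gb * gt' ^ (-n)))

@[simp] lemma psiA_of (n : ℤ) : psiA (FreeGroup.of n) = pr (gt' ^ n * ga * gt' ^ (-n)) :=
  FreeGroup.lift_apply_of

@[simp] lemma psiB_of (n : ℤ) : psiB (FreeGroup.of n) = pr (gt' ^ n * gb * gt' ^ (-n)) :=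
  FreeGroup.lift_apply_of

lemma psi_commute : ∀ f g : Fz, Commute (psiA f) (psiB g) := by
  have key : ∀ (n : ℤ) (f : Fz), Commute (psiA f) (pr (gt' ^ n * gb * gt' ^ (-n))) := by
    intro n f
    induction f using FreeGroup.induction_on with
    | C1 => rw [MonoidHom.map_one]; exact Commute.one_left _
    | of m => rw [psiA_of]; exact base_commute m n
    | inv_of m h => rw [MonoidHom.map_inv]; exact h.inv_left
    | mul x y hx hy => rw [MonoidHom.map_mul]; exact hx.mul_left hy
  intro f g
  induction g using FreeGroup.induction_on with
  | C1 => rw [MonoidHom.map_one]; exact Commute.one_right _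
  | of m => rw [psiB_of]; exact key m f
  | inv_of m h => rw [MonoidHom.map_inv]; exact h.inv_right
  | mul x y hx hy => rw [MonoidHom.map_mul]; exact hx.mul_right hy

def f1Q : Fz × Fz →* QQ := psiA.noncommCoprod psiB psi_commute

def f2Q : Multiplicative ℤ →* QQ := zpowersHom QQ (pr gt')

lemma f1Q_apply (p : Fz × Fz) : f1Q p = psiA p.1 * psiB p.2 := rfl

lemma f2Q_apply (g : Multiplicative ℤ) : f2Q g = pr gt' ^ g.toAdd := rfl

lemma psiA_equivariant (g : Multiplicative ℤ) (n : ℤ) :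
    psiA (sh g (FreeGroup.of n)) = f2Q g * psiA (FreeGroup.of n) * (f2Q g)⁻¹ := by
  rw [sh_of, psiA_of, psiA_of, f2Q_apply, ← MonoidHom.map_zpow, ← MonoidHom.map_inv,
    ← MonoidHom.map_mul, ← MonoidHom.map_mul]
  congr 1
  group

lemma psiB_equivariant (g : Multiplicative ℤ) (n : ℤ) :
    psiB (sh g (FreeGroup.of n)) = f2Q g * psiB (FreeGroup.of n) * (f2Q g)⁻¹ := by
  rw [sh_of, psiB_of, psiB_of, f2Q_apply, ← MonoidHom.map_zpow, ← MonoidHom.map_inv,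
    ← MonoidHom.map_mul, ← MonoidHom.map_mul]
  congr 1
  group

/-- the inverse direction : `W` maps to the quotient `QQ` -/
def chi : W →* QQ :=
  SemidirectProduct.lift f1Q f2Q (fun g => by
    apply prod_hom_ext
    · apply FreeGroup.ext_hom
      intro n
      show f1Q (sh2 g (FreeGroup.of n, 1)) = MulAut.conj (f2Q g) (f1Q (FreeGroup.of n, 1))
      have h1 : (sh g (1 : Fz)) = 1 := _root_.map_one _
      have hL : f1Q (sh2 g (FreeGroup.of n, 1)) = psiA (sh g (FreeGroup.of n)) := by
        rw [sh2_apply]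
        show psiA (sh g (FreeGroup.of n)) * psiB (sh g 1) = _
        rw [h1, MonoidHom.map_one, mul_one]
      have hR : f1Q ((FreeGroup.of n : Fz), (1 : Fz)) = psiA (FreeGroup.of n) := by
        show psiA (FreeGroup.of n) * psiB 1 = _
        rw [MonoidHom.map_one, mul_one]
      rw [hL, MulAut.conj_apply, hR, psiA_equivariant]
    · apply FreeGroup.ext_hom
      intro n
      show f1Q (sh2 g (1, FreeGroup.of n)) = MulAut.conj (f2Q g) (f1Q (1, FreeGroup.of n))
      have h1 : (sh g (1 : Fz)) = 1 := _root_.map_one _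
      have hL : f1Q (sh2 g (1, FreeGroup.of n)) = psiB (sh g (FreeGroup.of n)) := by
        rw [sh2_apply]
        show psiA (sh g 1) * psiB (sh g (FreeGroup.of n)) = _
        rw [h1, MonoidHom.map_one, one_mul]
      have hR : f1Q ((1 : Fz), (FreeGroup.of n : Fz)) = psiB (FreeGroup.of n) := by
        show psiA 1 * psiB (FreeGroup.of n) = _
        rw [MonoidHom.map_one, one_mul]
      rw [hL, MulAut.conj_apply, hR, psiB_equivariant])

lemma chi_comp_phi : chi.comp phi = pr := by
  apply FreeGroup.ext_hom
  intro i
  fin_cases i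
  · show chi (phi ga) = pr ga
    rw [phi_a, chi, SemidirectProduct.lift_inl]
    show psiA (FreeGroup.of 0) * psiB 1 = pr ga
    rw [psiA_of, MonoidHom.map_one, mul_one]
    congr 1
  · show chi (phi gb) = pr gb
    rw [phi_b, chi, SemidirectProduct.lift_inl]
    show psiA 1 * psiB (FreeGroup.of 0) = pr gb
    rw [psiB_of, MonoidHom.map_one, one_mul]
    congr 1
  · show chi (phi gt') = pr gt'
    rw [phi_t, chi, SemidirectProduct.lift_inr, f2Q_apply]
    simp

lemma ker_phi_eq : phi.ker = NN := by
  apply le_antisymm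
  · intro w hw
    have : pr w = chi (phi w) := (DFunLike.congr_fun chi_comp_phi w).symm
    rw [MonoidHom.mem_ker.mp hw, MonoidHom.map_one] at this
    rwa [← QuotientGroup.eq_one_iff (G := F3) (N := NN)]
  · exact NN_le_ker

/-! ### Finitely presentable groups have finitely normally generated kernels -/

lemma fp_kernel {Q : Type*} [Group Q] {n : ℕ} {R : Set (FreeGroup (Fin n))} (hR : R.Finite)
    (e : PresentedGroup R ≃* Q) {m : ℕ} (φ : FreeGroup (Fin m) →* Q)
    (hφ : Function.Surjective φ) :
    ∃ S : Set (FreeGroup (Fin m)), S.Finite ∧ φ.ker = Subgroup.normalClosure S := by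
  classical
  set ψ : FreeGroup (Fin n) →* Q := e.toMonoidHom.comp (PresentedGroup.mk R) with hψdef
  have hψsurj : Function.Surjective ψ :=
    e.surjective.comp (PresentedGroup.mk_surjective R)
  have hkerψ : ψ.ker = Subgroup.normalClosure R := by
    ext w
    rw [MonoidHom.mem_ker, hψdef, MonoidHom.comp_apply]
    rw [show (e.toMonoidHom (PresentedGroup.mk R w) = 1) ↔ (PresentedGroup.mk R w = 1) from
      ⟨fun h => e.injective (h.trans (MonoidHom.map_one e.toMonoidHom).symm),
        fun h => by rw [h, MonoidHom.map_one]⟩]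
    exact QuotientGroup.eq_one_iff w
  set am : FreeGroup (Fin m) →* FreeGroup (Fin n) :=
    FreeGroup.lift (fun i => Classical.choose (hψsurj (φ (FreeGroup.of i)))) with hamdef
  set bm : FreeGroup (Fin n) →* FreeGroup (Fin m) :=
    FreeGroup.lift (fun j => Classical.choose (hφ (ψ (FreeGroup.of j)))) with hbmdef
  have hψa : ψ.comp am = φ := by
    apply FreeGroup.ext_hom
    intro i
    rw [MonoidHom.comp_apply, hamdef, FreeGroup.lift_apply_of]
    exact Classical.choose_spec (hψsurj (φ (FreeGroup.of i)))
  have hφb : φ.comp bm = ψ := by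
    apply FreeGroup.ext_hom
    intro j
    rw [MonoidHom.comp_apply, hbmdef, FreeGroup.lift_apply_of]
    exact Classical.choose_spec (hφ (ψ (FreeGroup.of j)))
  set S : Set (FreeGroup (Fin m)) :=
    (bm '' R) ∪ Set.range (fun i : Fin m => (FreeGroup.of i)⁻¹ * bm (am (FreeGroup.of i)))
    with hSdef
  refine ⟨S, (hR.image bm).union (Set.finite_range _), ?_⟩
  apply le_antisymm
  · -- ker φ ≤ normalClosure S
    set N1 := Subgroup.normalClosure S with hN1def
    haveI : N1.Normal := Subgroup.normalClosure_normal
    have hall : ∀ u : FreeGroup (Fin m), u⁻¹ * bm (am u) ∈ N1 := by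
      intro u
      induction u using FreeGroup.induction_on with
      | C1 =>
        rw [MonoidHom.map_one, MonoidHom.map_one, inv_one, one_mul]
        exact one_mem N1
      | of i =>
        exact Subgroup.subset_normalClosure (Or.inr ⟨i, rfl⟩)
      | inv_of i h =>
        set u : FreeGroup (Fin m) := FreeGroup.of i
        have heq : u⁻¹⁻¹ * bm (am u⁻¹) = u * (u⁻¹ * bm (am u))⁻¹ * u⁻¹ := by
          rw [MonoidHom.map_inv, MonoidHom.map_inv]
          group
        show u⁻¹⁻¹ * bm (am u⁻¹) ∈ N1
        rw [heq]
        exact Subgroup.Normal.conj_mem ‹N1.Normal› _ (N1.inv_mem h) u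
      | mul x y hx hy =>
        have heq : (x * y)⁻¹ * bm (am (x * y)) =
            (y⁻¹ * (x⁻¹ * bm (am x)) * y) * (y⁻¹ * bm (am y)) := by
          rw [MonoidHom.map_mul, MonoidHom.map_mul]
          group
        rw [heq]
        refine N1.mul_mem ?_ hy
        have := Subgroup.Normal.conj_mem ‹N1.Normal› _ hx y⁻¹
        rwa [inv_inv] at this
    intro w hw
    have haw : am w ∈ Subgroup.normalClosure R := by
      rw [← hkerψ, MonoidHom.mem_ker]
      have : ψ (am w) = φ w := DFunLike.congr_fun hψa w
      rw [this]
      exact MonoidHom.mem_ker.mp hw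
    have hbaw : bm (am w) ∈ N1 := by
      haveI : (N1.comap bm).Normal := Subgroup.Normal.comap ‹N1.Normal› bm
      have hle : Subgroup.normalClosure R ≤ N1.comap bm := by
        apply Subgroup.normalClosure_le_normal
        intro r hr
        exact Subgroup.subset_normalClosure (Or.inl ⟨r, hr, rfl⟩)
      exact hle haw
    have : w = bm (am w) * (w⁻¹ * bm (am w))⁻¹ := by group
    rw [this]
    exact N1.mul_mem hbaw (N1.inv_mem (hall w))
  · -- normalClosure S ≤ ker φ
    apply Subgroup.normalClosure_le_normal
    rintro x (⟨r, hr, rfl⟩ | ⟨i, rfl⟩)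
    · have : φ (bm r) = ψ r := DFunLike.congr_fun hφb r
      show bm r ∈ φ.ker
      rw [MonoidHom.mem_ker, this, ← MonoidHom.mem_ker, hkerψ]
      exact Subgroup.subset_normalClosure hr
    · show (FreeGroup.of i)⁻¹ * bm (am (FreeGroup.of i)) ∈ φ.ker
      rw [MonoidHom.mem_ker, MonoidHom.map_mul, MonoidHom.map_inv]
      have : φ (bm (am (FreeGroup.of i))) = ψ (am (FreeGroup.of i)) :=
        DFunLike.congr_fun hφb (am (FreeGroup.of i))
      rw [this, show ψ (am (FreeGroup.of i)) = φ (FreeGroup.of i) from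
        DFunLike.congr_fun hψa (FreeGroup.of i)]
      group

/-! ### Witness homomorphisms -/

/-- the witness homomorphism to a permutation group -/
def wit (M : ℕ) : F3 →* Equiv.Perm ℤ :=
  FreeGroup.lift ![Equiv.swap 0 1, Equiv.swap (-(M : ℤ) - 2) (-(M : ℤ) - 1), Equiv.addRight 1]

@[simp] lemma wit_a (M : ℕ) : wit M ga = Equiv.swap 0 1 := by simp [wit, ga]
@[simp] lemma wit_b (M : ℕ) : wit M gb = Equiv.swap (-(M : ℤ) - 2) (-(M : ℤ) - 1) := by
  simp [wit, gb]
@[simp] lemma wit_t (M : ℕ) : wit M gt' = Equiv.addRight 1 := by simp [wit, gt']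

lemma wit_t_zpow (M : ℕ) (k : ℤ) : wit M (gt' ^ k) = Equiv.addRight k := by
  have hz : ∀ (a n : ℤ), (Equiv.addRight a : Equiv.Perm ℤ) ^ n = Equiv.addRight (n • a) := by
    intro a n
    induction n using Int.induction_on with
    | zero => ext x; simp
    | succ i ih => ext x; rw [zpow_add_one, Equiv.Perm.mul_apply, ih]; simp [add_smul, add_assoc]; ring
    | pred i ih =>
      ext x; rw [zpow_sub_one, Equiv.Perm.mul_apply, ih]; simp [sub_smul, Equiv.Perm.inv_def]; ring
  rw [MonoidHom.map_zpow, wit_t, hz]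
  norm_num

lemma wit_cb (M : ℕ) (k : ℤ) :
    wit M (cb k) = Equiv.swap (-(M : ℤ) - 2 + k) (-(M : ℤ) - 1 + k) := by
  rw [cb, MonoidHom.map_mul, MonoidHom.map_mul, wit_t_zpow, wit_b, wit_t_zpow]
  have h1 : Equiv.addRight (-k) = (Equiv.addRight k)⁻¹ := by
    ext x
    rw [show ((Equiv.addRight k)⁻¹ : Equiv.Perm ℤ) = (Equiv.addRight k).symm from rfl,
      Equiv.addRight_symm]
  rw [h1]
  have := Equiv.swap_apply_apply (Equiv.addRight k) (-(M : ℤ) - 2) (-(M : ℤ) - 1)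
  rw [← this]
  congr 1

lemma swap_commute_of_ne {a b c d : ℤ} (h1 : a ≠ c) (h2 : a ≠ d) (h3 : b ≠ c) (h4 : b ≠ d) :
    Commute (Equiv.swap a b) (Equiv.swap c d) := by
  unfold Commute SemiconjBy
  ext x
  simp only [Equiv.Perm.mul_apply, Equiv.swap_apply_def]
  split_ifs <;> omega

lemma wit_rel_eq (M : ℕ) (k : ℤ) (hk : |k| ≤ (M : ℤ)) : wit M (rel k) = 1 := by
  rw [rel, map_commutatorElement, commutatorElement_eq_one_iff_commute, wit_a, wit_cb]
  have hk' := abs_le.mp hk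
  apply swap_commute_of_ne <;> omega

lemma wit_rel_ne (M : ℕ) : wit M (rel ((M : ℤ) + 1)) ≠ 1 := by
  rw [rel, map_commutatorElement, wit_a, wit_cb]
  have h1 : -(M : ℤ) - 2 + ((M : ℤ) + 1) = -1 := by ring
  have h2 : -(M : ℤ) - 1 + ((M : ℤ) + 1) = 0 := by ring
  rw [h1, h2]
  intro h
  have hc := commutatorElement_eq_one_iff_commute.mp h
  have hpt := DFunLike.congr_fun hc (-1 : ℤ)
  simp only [Equiv.Perm.mul_apply, Equiv.swap_apply_def] at hpt
  split_ifs at hpt <;> omega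

/-! ### `W` is not finitely presentable -/

theorem W_not_fp : ¬ ∃ (n : ℕ) (R : Set (FreeGroup (Fin n))), R.Finite ∧
    Nonempty (PresentedGroup R ≃* W) := by
  rintro ⟨n, R, hR, ⟨e⟩⟩
  obtain ⟨S, hSfin, hker⟩ := fp_kernel hR e phi phi_surjective
  set D : ℕ → Subgroup F3 := fun M => Subgroup.normalClosure (rel '' {k : ℤ | |k| ≤ (M : ℤ)})
    with hDdef
  have hDmono : Monotone D := by
    intro i j hij
    apply Subgroup.normalClosure_mono
    apply Set.image_mono
    intro k hk
    show |k| ≤ (j : ℤ)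
    have hki : |k| ≤ (i : ℤ) := hk
    exact le_trans hki (by exact_mod_cast hij)
  have hdir : Directed (· ≤ ·) D := hDmono.directed_le
  have hsupnormal : (⨆ M, D M).Normal := by
    constructor
    intro x hx g
    obtain ⟨M, hM⟩ := (Subgroup.mem_iSup_of_directed hdir).mp hx
    exact (Subgroup.mem_iSup_of_directed hdir).mpr
      ⟨M, (Subgroup.normalClosure_normal).conj_mem _ hM g⟩
  have hNle : NN ≤ ⨆ M, D M := by
    haveI := hsupnormal
    apply Subgroup.normalClosure_le_normal
    rintro x ⟨k, rfl⟩
    apply (Subgroup.mem_iSup_of_directed hdir).mpr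
    refine ⟨k.natAbs, Subgroup.subset_normalClosure ⟨k, ?_, rfl⟩⟩
    show |k| ≤ (k.natAbs : ℤ)
    rw [Int.abs_eq_natAbs]
  have hSsub : ∀ s ∈ S, ∃ M, s ∈ D M := by
    intro s hs
    have hsNN : s ∈ NN := by
      rw [← ker_phi_eq, hker]
      exact Subgroup.subset_normalClosure hs
    exact (Subgroup.mem_iSup_of_directed hdir).mp (hNle hsNN)
  have huniform : (∀ s ∈ S, ∃ M, s ∈ D M) → ∃ M, ∀ s ∈ S, s ∈ D M := by
    refine Set.Finite.induction_on
      (motive := fun T _ => (∀ s ∈ T, ∃ M, s ∈ D M) → ∃ M, ∀ s ∈ T, s ∈ D M) S hSfin ?_ ?_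
    · exact fun _ => ⟨0, fun s hs => absurd hs (Set.notMem_empty s)⟩
    · rintro a T ha hTfin ih hyp
      obtain ⟨M1, hM1⟩ := ih (fun x hx => hyp x (Set.mem_insert_of_mem a hx))
      obtain ⟨M2, hM2⟩ := hyp a (Set.mem_insert a T)
      refine ⟨max M1 M2, ?_⟩
      rintro x (rfl | hx)
      · exact hDmono (le_max_right M1 M2) hM2
      · exact hDmono (le_max_left M1 M2) (hM1 x hx)
  obtain ⟨M, hM⟩ := huniform hSsub
  have hkerle : phi.ker ≤ D M := by
    rw [hker]
    exact Subgroup.normalClosure_le_normal (fun s hs => hM s hs)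
  have hrelmem : rel ((M : ℤ) + 1) ∈ D M := by
    apply hkerle
    exact rel_mem_ker _
  have hwitkill : D M ≤ (wit M).ker := by
    apply Subgroup.normalClosure_le_normal
    rintro y ⟨k, hk, rfl⟩
    exact MonoidHom.mem_ker.mpr (wit_rel_eq M k hk)
  exact wit_rel_ne M (MonoidHom.mem_ker.mp (hwitkill hrelmem))

/-! ### Transfer to the kernel of τ -/

lemma sigma_iota_fst (w : W) : sigma ((iota w).1) = SemidirectProduct.rightHom w := by
  rcases w with ⟨⟨f, g⟩, k⟩
  rw [iota_mk]
  show sigma (eta ⟨f, k⟩) = _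
  rw [sigma_eta]
  rfl

lemma sigma_iota_snd (w : W) : sigma ((iota w).2) = (SemidirectProduct.rightHom w)⁻¹ := by
  rcases w with ⟨⟨f, g⟩, k⟩
  rw [iota_mk]
  show sigma (omegaHom (eta ⟨g, k⟩)) = _
  rw [sigma_omegaHom, sigma_eta]
  rfl

theorem stallings_main (τ : F2 × F2 →* Multiplicative ℤ)
    (h₁ : ∀ i : Fin 2, τ (FreeGroup.of i, 1) = Multiplicative.ofAdd 1)
    (h₂ : ∀ i : Fin 2, τ (1, FreeGroup.of i) = Multiplicative.ofAdd 1) :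
    ¬ ∃ (n : ℕ) (R : Set (FreeGroup (Fin n))), R.Finite ∧
      Nonempty (PresentedGroup R ≃* τ.ker) := by
  have hτ : ∀ u v : F2, τ (u, v) = sigma u * sigma v := by
    have : τ = sigma.noncommCoprod sigma (fun a b => Commute.all _ _) := by
      apply prod_hom_ext
      · apply FreeGroup.ext_hom
        intro i
        show τ (FreeGroup.of i, 1) = sigma (FreeGroup.of i) * sigma 1
        rw [h₁ i, sigma_of, MonoidHom.map_one, mul_one]
      · apply FreeGroup.ext_hom
        intro i
        show τ (1, FreeGroup.of i) = sigma 1 * sigma (FreeGroup.of i)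
        rw [h₂ i, sigma_of, MonoidHom.map_one, one_mul]
    intro u v
    rw [this]
    rfl
  -- the isomorphism W ≃* τ.ker
  have hmem : ∀ w : W, iota w ∈ τ.ker := by
    intro w
    rw [MonoidHom.mem_ker, show (iota w) = ((iota w).1, (iota w).2) from rfl, hτ,
      sigma_iota_fst, sigma_iota_snd, mul_inv_cancel]
  set iotaK : W →* τ.ker := iota.codRestrict τ.ker hmem with hiotaKdef
  have hinj : Function.Injective iotaK := by
    intro x y h
    exact iota_injective (congrArg Subtype.val h)
  have hsurj : Function.Surjective iotaK := by
    rintro ⟨⟨u, v⟩, hmem'⟩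
    have : sigma u * sigma v = 1 := by
      rw [← hτ u v]
      exact MonoidHom.mem_ker.mp hmem'
    obtain ⟨w, hw⟩ := iota_surj u v this
    exact ⟨w, Subtype.ext hw⟩
  rintro ⟨n, R, hR, ⟨e⟩⟩
  exact W_not_fp ⟨n, R, hR, ⟨e.trans (MulEquiv.ofBijective iotaK ⟨hinj, hsurj⟩).symm⟩⟩

end Stallings

/-- Stallings' example: the kernel of the homomorphism `F₂ × F₂ → ℤ` sending each
standard generator to `1` is not finitely presentable. -/
theorem stallings_kernel_not_finitely_presentable
    (τ : FreeGroup (Fin 2) × FreeGroup (Fin 2) →* Multiplicative ℤ)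
    (h₁ : ∀ i : Fin 2, τ (FreeGroup.of i, 1) = Multiplicative.ofAdd 1)
    (h₂ : ∀ i : Fin 2, τ (1, FreeGroup.of i) = Multiplicative.ofAdd 1) :
    ¬ ∃ (n : ℕ) (R : Set (FreeGroup (Fin n))), R.Finite ∧
      Nonempty (PresentedGroup R ≃* τ.ker) := by
  exact Stallings.stallings_main τ h₁ h₂
end
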